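/- Every finite dimensional irreducible real representation of the algebra with generators a, b and relations bab⁻¹ = a⁻¹, b² = -1 has real dimension 2 or 4. -/

import Mathlib

open Polynomial
open Polynomial

lemma exists_quad_vec (V : Type*) [AddCommGroup V] [Module ℝ V] [FiniteDimensional ℝ V]
    [Nontrivial V] (a : Module.End ℝ V) :
    ∃ v : V, v ≠ 0 ∧ ∃ α β : ℝ, a (a v) = α • v + β • (a v) := by
  have hint : IsIntegral ℝ a := Algebra.IsIntegral.isIntegral a
  have hm0 : minpoly ℝ a ≠ 0 := minpoly.ne_zero hint
  have hmd : 0 < (minpoly ℝ a).natDegree := minpoly.natDegree_pos hint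
  obtain ⟨p, hpm, hpirr, hpdvd⟩ :=
    (minpoly ℝ a).exists_monic_irreducible_factor (not_isUnit_of_natDegree_pos _ hmd)
  obtain ⟨q, hq⟩ := hpdvd
  have hp0 : p ≠ 0 := hpirr.ne_zero
  have hq0 : q ≠ 0 := by rintro rfl; rw [mul_zero] at hq; exact hm0 hq
  have hpdeg : 0 < p.natDegree := hpirr.natDegree_pos
  have hdegsum : (minpoly ℝ a).natDegree = p.natDegree + q.natDegree := by
    rw [hq, Polynomial.natDegree_mul hp0 hq0]
  have haq : Polynomial.aeval a q ≠ 0 := by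
    intro h
    have h2 := minpoly.degree_le_of_ne_zero ℝ a hq0 h
    have h3 := Polynomial.natDegree_le_natDegree h2
    omega
  obtain ⟨w, hw⟩ : ∃ w, (Polynomial.aeval a q) w ≠ 0 := by
    by_contra hcon
    push_neg at hcon
    exact haq (LinearMap.ext fun x => by simpa using hcon x)
  refine ⟨Polynomial.aeval a q w, hw, ?_⟩
  set v := (Polynomial.aeval a q) w with hv
  have hpv : (Polynomial.aeval a p) v = 0 := by
    have h5 : Polynomial.aeval a (minpoly ℝ a) = Polynomial.aeval a p * Polynomial.aeval a q := by
      rw [hq, map_mul]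
    have h0 : Polynomial.aeval a (minpoly ℝ a) = 0 := minpoly.aeval ℝ a
    calc (Polynomial.aeval a p) v = (Polynomial.aeval a p * Polynomial.aeval a q) w := rfl
    _ = (0 : Module.End ℝ V) w := by rw [← h5, h0]
    _ = 0 := rfl
  have hdeg2 : p.natDegree ≤ 2 := hpirr.natDegree_le_two
  have h3 : p.natDegree < 3 := by omega
  rw [Polynomial.aeval_eq_sum_range' h3 a] at hpv
  have hexp : p.coeff 0 • v + p.coeff 1 • a v + p.coeff 2 • a (a v) = 0 := by
    simp only [Finset.sum_range_succ, Finset.sum_range_zero, zero_add, pow_zero, pow_one,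
      LinearMap.add_apply, LinearMap.smul_apply, Module.End.one_apply, pow_succ,
      one_mul, Module.End.mul_apply] at hpv
    convert hpv using 2
  by_cases hc2 : p.coeff 2 = 0
  · by_cases hc1 : p.coeff 1 = 0
    · exfalso
      have hc0 : p.coeff 0 = 0 := by
        rw [hc2, hc1] at hexp
        simpa [hw] using hexp
      have hple : ∀ i, p.coeff i = 0 := by
        intro i
        match i with
        | 0 => exact hc0
        | 1 => exact hc1
        | 2 => exact hc2
        | (n+3) => exact Polynomial.coeff_eq_zero_of_natDegree_lt (by omega)
      exact hp0 (Polynomial.ext fun i => by rw [hple i]; simp)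
    · have hav : a v = (-(p.coeff 0 / p.coeff 1)) • v := by
        rw [hc2] at hexp
        have h6 : p.coeff 1 • a v = (-(p.coeff 0)) • v := by
          linear_combination (norm := module) hexp
        have h4 := congrArg (fun x => (p.coeff 1)⁻¹ • x) h6
        simp only [smul_smul, inv_mul_cancel₀ hc1, one_smul] at h4
        rw [h4]
        module
      exact ⟨0, -(p.coeff 0 / p.coeff 1), by
        rw [hav, map_smul, hav, zero_smul, zero_add, smul_smul]⟩
  · refine ⟨-(p.coeff 0 / p.coeff 2), -(p.coeff 1 / p.coeff 2), ?_⟩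
    have h6 : p.coeff 2 • a (a v) = (-(p.coeff 0)) • v + (-(p.coeff 1)) • a v := by
      linear_combination (norm := module) hexp
    have h4 := congrArg (fun x => (p.coeff 2)⁻¹ • x) h6
    simp only [smul_smul, inv_mul_cancel₀ hc2, one_smul, smul_add] at h4
    rw [h4]
    module



/-- Every finite dimensional irreducible real representation of the algebra
generated by `a, b` with `bab⁻¹ = a⁻¹`, `b² = -1` has dimension 2 or 4. -/
theorem stmt18 (V : Type*) [AddCommGroup V] [Module ℝ V] [FiniteDimensional ℝ V]
    [Nontrivial V]
    (a b : Module.End ℝ V)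
    (hrel : ∃ a' : Module.End ℝ V, a * a' = 1 ∧ a' * a = 1 ∧ b * a = a' * b)
    (hb : b * b = -1)
    (hirr : ∀ W : Submodule ℝ V,
      Submodule.map a W ≤ W → Submodule.map b W ≤ W → W = ⊥ ∨ W = ⊤) :
    Module.finrank ℝ V = 2 ∨ Module.finrank ℝ V = 4 := by
  classical
  obtain ⟨a', h1, h2, h3⟩ := hrel
  -- pointwise relations
  have haa' : ∀ x, a (a' x) = x := fun x => by
    have := LinearMap.ext_iff.mp h1 x; simpa using this
  have ha'a : ∀ x, a' (a x) = x := fun x => by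
    have := LinearMap.ext_iff.mp h2 x; simpa using this
  have hba : ∀ x, b (a x) = a' (b x) := fun x => by
    have := LinearMap.ext_iff.mp h3 x; simpa using this
  have hab : ∀ x, a (b x) = b (a' x) := fun x => by
    have h9 := hba (a' x); rw [haa' x] at h9; rw [h9]; exact haa' _
  have hbb : ∀ x, b (b x) = -x := fun x => by
    have := LinearMap.ext_iff.mp hb x; simpa using this
  -- quadratic vector
  obtain ⟨v, hv, α, β, hquad⟩ := exists_quad_vec V a
  -- get the a' relation
  obtain ⟨v, hv, α, β, γ, δ, hquad, hinv⟩ :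
      ∃ v : V, v ≠ 0 ∧ ∃ α β γ δ : ℝ, a (a v) = α • v + β • (a v) ∧
        a' v = γ • v + δ • (a v) := by
    by_cases hα : α = 0
    · rw [hα, zero_smul, zero_add] at hquad
      have hav : a v = β • v := by
        have := congrArg a' hquad
        rw [ha'a, map_smul, ha'a] at this
        exact this
      have hβ : β ≠ 0 := by
        intro h
        rw [h, zero_smul] at hav
        have := congrArg a' hav
        rw [ha'a, map_zero] at this
        exact hv this
      refine ⟨v, hv, 0, β, β⁻¹, 0, by rw [zero_smul, zero_add]; exact hquad, ?_⟩
      have : a' v = β⁻¹ • v := by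
        have h5 := congrArg a' hav
        rw [ha'a, map_smul] at h5
        have := congrArg (fun x => β⁻¹ • x) h5
        simp only [smul_smul, inv_mul_cancel₀ hβ, one_smul] at this
        exact this.symm
      rw [this, zero_smul, add_zero]
    · refine ⟨v, hv, α, β, -(β/α), α⁻¹, hquad, ?_⟩
      have key : a ((-(β/α)) • v + α⁻¹ • (a v)) = v := by
        rw [map_add, map_smul, map_smul, hquad, smul_add, smul_smul, smul_smul]
        have h7 : α⁻¹ * α = 1 := inv_mul_cancel₀ hα
        rw [h7, one_smul]
        have : (-(β / α)) • a v + ((α⁻¹ * β) • a v) = 0 := by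
          rw [← add_smul]
          have : -(β / α) + α⁻¹ * β = 0 := by field_simp; ring
          rw [this, zero_smul]
        calc (-(β / α)) • a v + (v + (α⁻¹ * β) • a v)
            = v + ((-(β / α)) • a v + (α⁻¹ * β) • a v) := by abel
          _ = v + 0 := by rw [this]
          _ = v := add_zero v
      have := congrArg a' key
      rw [ha'a] at this
      exact this.symm
  -- invariant subspace
  set W := Submodule.span ℝ (Set.range ![v, a v, b v, b (a v)]) with hW
  have hmem : ∀ i : Fin 4, ![v, a v, b v, b (a v)] i ∈ W := fun i =>
    Submodule.subset_span (Set.mem_range_self i)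
  have hvW : v ∈ W := hmem 0
  have havW : a v ∈ W := hmem 1
  have hbvW : b v ∈ W := hmem 2
  have hbavW : b (a v) ∈ W := hmem 3
  have hmapa : Submodule.map a W ≤ W := by
    rw [hW, Submodule.map_span_le]
    rintro m ⟨i, rfl⟩
    fin_cases i
    · show a v ∈ W; exact havW
    · show a (a v) ∈ W
      rw [hquad]; exact W.add_mem (W.smul_mem _ hvW) (W.smul_mem _ havW)
    · show a (b v) ∈ W
      rw [hab, hinv, map_add, map_smul, map_smul]
      exact W.add_mem (W.smul_mem _ hbvW) (W.smul_mem _ hbavW)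
    · show a (b (a v)) ∈ W
      rw [hab, ha'a]; exact hbvW
  have hmapb : Submodule.map b W ≤ W := by
    rw [hW, Submodule.map_span_le]
    rintro m ⟨i, rfl⟩
    fin_cases i
    · show b v ∈ W; exact hbvW
    · show b (a v) ∈ W; exact hbavW
    · show b (b v) ∈ W; rw [hbb]; exact W.neg_mem hvW
    · show b (b (a v)) ∈ W; rw [hbb]; exact W.neg_mem havW
  have hWtop : W = ⊤ := by
    rcases hirr W hmapa hmapb with h | h
    · exact absurd (h ▸ hvW) (by simpa using hv)
    · exact h
  have hle4 : Module.finrank ℝ V ≤ 4 := by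
    have := finrank_le_of_span_eq_top (R := ℝ) (v := ![v, a v, b v, b (a v)]) hWtop
    simpa using this
  have hpos : 0 < Module.finrank ℝ V := Module.finrank_pos
  -- parity
  have heven : Even (Module.finrank ℝ V) := by
    rcases Nat.even_or_odd (Module.finrank ℝ V) with h | h
    · exact h
    · exfalso
      have hdet : LinearMap.det b * LinearMap.det b = (-1 : ℝ) ^ Module.finrank ℝ V := by
        have h5 : LinearMap.det (b * b) = LinearMap.det b * LinearMap.det b := by
          rw [Module.End.mul_eq_comp, LinearMap.det_comp]
        have h6 : (b * b : Module.End ℝ V) = (-1 : ℝ) • (1 : Module.End ℝ V) := by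
          rw [hb]; simp
        rw [← h5, h6, LinearMap.det_smul]
        simp
      rw [h.neg_one_pow] at hdet
      nlinarith [mul_self_nonneg (LinearMap.det b)]
  obtain ⟨k, hk⟩ := heven
  omega
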